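/- Assume: T > 0; d2, r2, b2 : ℝ → ℝ are continuous, positive, T-periodic; the kernel J2 : ℝ → ℝ is nonnegative, Lebesgue measurable, even (J2(x) = J2(−x)), satisfies ∫_ℝ J2(x) dx = 1 and ∫_ℝ J2(x)e^{−λx} dx < ∞ for every λ ∈ ℝ. Define γ2(μ) = (1/T)∫_0^T [d2(t)(∫_ℝ J2(y)e^{μy} dy − 1) + b2(t)q(t)] dt for μ > 0. Then inf_{0 < μ < ∞} γ2(μ)/μ > 0. -/

import Mathlib

open MeasureTheory Set Filter

noncomputable def p0c (r a : ℝ → ℝ) (T : ℝ) : ℝ :=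
  (Real.exp (∫ s in (0:ℝ)..T, r s) - 1) /
    ∫ s in (0:ℝ)..T, Real.exp (∫ τ in (0:ℝ)..s, r τ) * a s

noncomputable def pfun (r a : ℝ → ℝ) (T t : ℝ) : ℝ :=
  p0c r a T * Real.exp (∫ s in (0:ℝ)..t, r s) /
    (1 + p0c r a T * ∫ s in (0:ℝ)..t, Real.exp (∫ τ in (0:ℝ)..s, r τ) * a s)

lemma cosh_lb (x : ℝ) : 2 + x ^ 2 ≤ Real.exp x + Real.exp (-x) := by
  have h1 : |x / 2| ≤ Real.sinh |x / 2| := Real.self_le_sinh_iff.mpr (abs_nonneg _)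
  have h2 : (x / 2) ^ 2 ≤ Real.sinh (x / 2) ^ 2 := by
    rw [← sq_abs (x / 2), ← sq_abs (Real.sinh (x / 2)), Real.abs_sinh]
    exact pow_le_pow_left₀ (abs_nonneg _) h1 2
  have h3 : Real.cosh x = 1 + 2 * Real.sinh (x / 2) ^ 2 := by
    have hc := Real.cosh_two_mul (x / 2)
    have hs := Real.cosh_sq (x / 2)
    have : (2 : ℝ) * (x / 2) = x := by ring
    rw [this] at hc
    rw [hc, hs]; ring
  have h4 : Real.cosh x = (Real.exp x + Real.exp (-x)) / 2 := Real.cosh_eq x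
  nlinarith

theorem stmt4 (T : ℝ) (hT : 0 < T) (d2 r2 b2 J2 : ℝ → ℝ)
    (hd2 : Continuous d2 ∧ (∀ t, 0 < d2 t) ∧ ∀ t, d2 (t + T) = d2 t)
    (hr2 : Continuous r2 ∧ (∀ t, 0 < r2 t) ∧ ∀ t, r2 (t + T) = r2 t)
    (hb2 : Continuous b2 ∧ (∀ t, 0 < b2 t) ∧ ∀ t, b2 (t + T) = b2 t)
    (hJ2 : Measurable J2 ∧ (∀ x, 0 ≤ J2 x) ∧ (∫ x, J2 x) = 1 ∧
      ∀ l : ℝ, Integrable fun x => J2 x * Real.exp (-l * x))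
    (hJ2even : ∀ x, J2 x = J2 (-x))
    :
    0 < sInf ((fun μ : ℝ =>
      ((1 / T) * ∫ t in (0:ℝ)..T,
        (d2 t * ((∫ y, J2 y * Real.exp (μ * y)) - 1) + b2 t * pfun r2 b2 T t)) / μ)
      '' Set.Ioi 0) := by
  obtain ⟨hdc, hdp, -⟩ := hd2
  obtain ⟨hrc, hrp, -⟩ := hr2
  obtain ⟨hbc, hbp, -⟩ := hb2
  obtain ⟨hJm, hJnn, hJint, hJexp⟩ := hJ2
  have hJexp' : ∀ l : ℝ, Integrable fun x => J2 x * Real.exp (l * x) := by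
    intro l; simpa using hJexp (-l)
  have hJ1 : Integrable J2 := by
    have := hJexp 0
    simpa using this
  -- integrability of J2 y * y^2
  have hsq_int : Integrable (fun y => J2 y * y ^ 2) := by
    refine Integrable.mono ((hJexp' 1).add (hJexp' (-1))) ?_ ?_
    · exact ((hJm.mul ((measurable_id.pow_const 2))).aestronglyMeasurable)
    · refine Eventually.of_forall fun y => ?_
      have hcl := cosh_lb y
      have h1 : (0:ℝ) ≤ J2 y := hJnn y
      have e1 : (0:ℝ) ≤ Real.exp y := (Real.exp_pos y).le
      have e2 : (0:ℝ) ≤ Real.exp (-y) := (Real.exp_pos (-y)).le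
      simp only [Pi.add_apply, one_mul, neg_one_mul, Real.norm_eq_abs]
      rw [abs_of_nonneg (by positivity),
        abs_of_nonneg (add_nonneg (mul_nonneg h1 e1) (mul_nonneg h1 e2))]
      nlinarith [mul_le_mul_of_nonneg_left hcl h1]
  set σ := ∫ y, J2 y * y ^ 2 with hσdef
  have hσnn : 0 ≤ σ := integral_nonneg fun y => mul_nonneg (hJnn y) (sq_nonneg y)
  have hσpos : 0 < σ := by
    rcases hσnn.lt_or_eq with h | h
    · exact h
    exfalso
    have hz : (fun y => J2 y * y ^ 2) =ᵐ[volume] 0 :=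
      (integral_eq_zero_iff_of_nonneg_ae
        (Eventually.of_forall fun y => mul_nonneg (hJnn y) (sq_nonneg y)) hsq_int).mp h.symm
    have hne : ∀ᵐ y : ℝ, y ≠ 0 := by
      rw [ae_iff]
      have : {y : ℝ | ¬ y ≠ 0} = {0} := by ext y; simp
      rw [this]
      exact measure_singleton 0
    have hJz : J2 =ᵐ[volume] 0 := by
      filter_upwards [hz, hne] with y h1 h2
      have : y ^ 2 ≠ 0 := pow_ne_zero 2 h2
      have := mul_eq_zero.mp h1
      tauto
    have : (∫ y, J2 y) = 0 := by
      rw [integral_congr_ae hJz]; simp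
    rw [hJint] at this; norm_num at this
  -- time part
  have hRcont : Continuous fun t => ∫ s in (0:ℝ)..t, r2 s :=
    intervalIntegral.continuous_primitive (fun a b => hrc.intervalIntegrable a b) 0
  have hgcont : Continuous fun s => Real.exp (∫ τ in (0:ℝ)..s, r2 τ) * b2 s :=
    (Real.continuous_exp.comp hRcont).mul hbc
  have hScont : Continuous fun t =>
      ∫ s in (0:ℝ)..t, Real.exp (∫ τ in (0:ℝ)..s, r2 τ) * b2 s :=
    intervalIntegral.continuous_primitive (fun a b => hgcont.intervalIntegrable a b) 0
  have hp0 : 0 < p0c r2 b2 T := by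
    unfold p0c
    apply div_pos
    · have h1 : 0 < ∫ s in (0:ℝ)..T, r2 s :=
        intervalIntegral.intervalIntegral_pos_of_pos (hrc.intervalIntegrable 0 T) hrp hT
      have := Real.exp_lt_exp.mpr h1
      rw [Real.exp_zero] at this
      linarith
    · exact intervalIntegral.intervalIntegral_pos_of_pos (hgcont.intervalIntegrable 0 T)
        (fun s => mul_pos (Real.exp_pos _) (hbp s)) hT
  have hSnn : ∀ t ∈ Icc (0:ℝ) T,
      0 ≤ ∫ s in (0:ℝ)..t, Real.exp (∫ τ in (0:ℝ)..s, r2 τ) * b2 s := by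
    intro t ht
    exact intervalIntegral.integral_nonneg ht.1
      (fun u _ => le_of_lt (mul_pos (Real.exp_pos _) (hbp u)))
  have hden : ∀ t ∈ Icc (0:ℝ) T,
      0 < 1 + p0c r2 b2 T * ∫ s in (0:ℝ)..t, Real.exp (∫ τ in (0:ℝ)..s, r2 τ) * b2 s := by
    intro t ht
    have := mul_nonneg hp0.le (hSnn t ht)
    linarith
  have hqpos : ∀ t ∈ Icc (0:ℝ) T, 0 < pfun r2 b2 T t := by
    intro t ht
    unfold pfun
    exact div_pos (mul_pos hp0 (Real.exp_pos _)) (hden t ht)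
  have hqcont : ContinuousOn (pfun r2 b2 T) (Icc 0 T) := by
    have hpf : pfun r2 b2 T = fun t =>
        p0c r2 b2 T * Real.exp (∫ s in (0:ℝ)..t, r2 s) /
          (1 + p0c r2 b2 T * ∫ s in (0:ℝ)..t, Real.exp (∫ τ in (0:ℝ)..s, r2 τ) * b2 s) := rfl
    rw [hpf]
    apply ContinuousOn.div
    · exact (continuous_const.mul (Real.continuous_exp.comp hRcont)).continuousOn
    · exact (continuous_const.add (continuous_const.mul hScont)).continuousOn
    · exact fun t ht => (hden t ht).ne'
  set A := ∫ t in (0:ℝ)..T, d2 t with hAdef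
  have hA : 0 < A :=
    intervalIntegral.intervalIntegral_pos_of_pos (hdc.intervalIntegrable 0 T) hdp hT
  have hBint : IntervalIntegrable (fun t => b2 t * pfun r2 b2 T t) volume 0 T := by
    apply ContinuousOn.intervalIntegrable
    rw [uIcc_of_le hT.le]
    exact hbc.continuousOn.mul hqcont
  set B := ∫ t in (0:ℝ)..T, b2 t * pfun r2 b2 T t with hBdef
  have hB : 0 < B :=
    intervalIntegral.intervalIntegral_pos_of_pos_on hBint
      (fun t ht => mul_pos (hbp t) (hqpos t ⟨ht.1.le, ht.2.le⟩)) hT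
  -- spatial lower bound
  have hIlb : ∀ μ : ℝ, 1 + μ ^ 2 * σ / 2 ≤ ∫ y, J2 y * Real.exp (μ * y) := by
    intro μ
    have hi1 : Integrable fun y => J2 y * Real.exp (μ * y) := hJexp' μ
    have hi2 : Integrable fun y => J2 y * Real.exp (-μ * y) := hJexp μ
    have heq : (∫ y, J2 y * Real.exp (-μ * y)) = ∫ y, J2 y * Real.exp (μ * y) := by
      rw [← integral_neg_eq_self (fun y => J2 y * Real.exp (-μ * y)) volume]
      congr 1
      funext y
      rw [← hJ2even y]
      ring_nf
    have hlhs_int : Integrable (fun y => J2 y * (2 + (μ * y) ^ 2)) := by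
      have : (fun y => J2 y * (2 + (μ * y) ^ 2)) =
          fun y => 2 * J2 y + μ ^ 2 * (J2 y * y ^ 2) := by
        funext y; ring
      rw [this]
      exact (hJ1.const_mul 2).add (hsq_int.const_mul (μ ^ 2))
    have hmono : (∫ y, J2 y * (2 + (μ * y) ^ 2)) ≤
        ∫ y, (J2 y * Real.exp (μ * y) + J2 y * Real.exp (-μ * y)) := by
      apply integral_mono hlhs_int (hi1.add hi2)
      intro y
      have hcl := cosh_lb (μ * y)
      have h1 : (0:ℝ) ≤ J2 y := hJnn y
      simp only [Pi.add_apply, neg_mul]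
      nlinarith [mul_le_mul_of_nonneg_left hcl h1]
    rw [integral_add hi1 hi2, heq] at hmono
    have hcomp : (∫ y, J2 y * (2 + (μ * y) ^ 2)) = 2 + μ ^ 2 * σ := by
      have : (fun y => J2 y * (2 + (μ * y) ^ 2)) =
          fun y => 2 * J2 y + μ ^ 2 * (J2 y * y ^ 2) := by
        funext y; ring
      rw [this, integral_add (hJ1.const_mul 2) (hsq_int.const_mul (μ ^ 2)),
        integral_const_mul, integral_const_mul, hJint, ← hσdef]
      ring
    rw [hcomp] at hmono
    linarith
  -- final bound
  set K := (1 / T) * (2 * Real.sqrt ((σ / 2 * A) * B)) with hKdef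
  have hK : 0 < K := by
    have : 0 < Real.sqrt ((σ / 2 * A) * B) := Real.sqrt_pos.mpr (by positivity)
    positivity
  refine lt_of_lt_of_le hK (le_csInf ⟨_, ⟨1, by norm_num, rfl⟩⟩ ?_)
  rintro x ⟨μ, hμ, rfl⟩
  simp only [mem_Ioi] at hμ
  have hsplit : (∫ t in (0:ℝ)..T,
      (d2 t * ((∫ y, J2 y * Real.exp (μ * y)) - 1) + b2 t * pfun r2 b2 T t)) =
      ((∫ y, J2 y * Real.exp (μ * y)) - 1) * A + B := by
    rw [intervalIntegral.integral_add (f := fun t => d2 t * ((∫ y, J2 y * Real.exp (μ * y)) - 1)) ((hdc.mul continuous_const).intervalIntegrable 0 T) hBint,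
      intervalIntegral.integral_mul_const, ← hAdef, ← hBdef]
    ring
  have hc : μ ^ 2 * σ / 2 ≤ (∫ y, J2 y * Real.exp (μ * y)) - 1 := by
    linarith [hIlb μ]
  have step1 : 2 * Real.sqrt ((σ / 2 * A) * B) * μ ≤ μ ^ 2 * σ / 2 * A + B := by
    have h := sq_nonneg (Real.sqrt (σ / 2 * A) * μ - Real.sqrt B)
    have e1 : Real.sqrt (σ / 2 * A) ^ 2 = σ / 2 * A := Real.sq_sqrt (by positivity)
    have e2 : Real.sqrt B ^ 2 = B := Real.sq_sqrt hB.le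
    have e3 : Real.sqrt ((σ / 2 * A) * B) = Real.sqrt (σ / 2 * A) * Real.sqrt B :=
      Real.sqrt_mul (by positivity) _
    nlinarith
  beta_reduce
  rw [hsplit, le_div_iff₀ hμ]
  have hT' : (0:ℝ) < 1 / T := by positivity
  have hcA : μ ^ 2 * σ / 2 * A ≤ ((∫ y, J2 y * Real.exp (μ * y)) - 1) * A :=
    mul_le_mul_of_nonneg_right hc hA.le
  calc K * μ = (1 / T) * (2 * Real.sqrt ((σ / 2 * A) * B) * μ) := by rw [hKdef]; ring
    _ ≤ (1 / T) * (((∫ y, J2 y * Real.exp (μ * y)) - 1) * A + B) := by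
        apply mul_le_mul_of_nonneg_left _ hT'.le
        linarith
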